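/- Let U ⊆ ℝ^p be an open convex set and ξ : ℝ^p → ℝ ∪ {+∞} a convex function finite and differentiable on U, with Bregman divergence D(y, y') = ξ(y) − ξ(y') − ⟨∇ξ(y'), y − y'⟩. Let γ ≥ 0, let g : ℝ^m → ℝ ∪ {+∞} be proper convex, let h : ℝ^p → ℝ ∪ {+∞} be proper convex with h − γξ convex on U, and let K : ℝ^m → ℝ^p be linear. Define the Lagrangian L(x, y) = g(x) + ⟨Kx, y⟩ − h(y). Let τ' > 0, τ > 0, β > 0, set θ = τ/τ' and σ = βτ. Suppose: x⁰ ∈ ℝ^m, y ∈ U, x¹ is the minimizer of x ↦ g(x) + ⟨Kx, y¹⟩ + ‖x − x⁰‖₂²/(2τ') for some y¹ ∈ U; x̄ = x¹ + θ(x¹ − x⁰); y² ∈ U is the minimizer of w ↦ h(w) − ⟨Kx̄, w⟩ + D(w, y¹)/σ; x² is the minimizer of x ↦ g(x) + ⟨Kx, y²⟩ + ‖x − x¹‖₂²/(2τ); and the linesearch condition (1/2)‖x² − x̄‖₂² + β^{-1} D(y², y¹) + τ ⟨K(x² − x̄), y² − y¹⟩ ≥ 0 holds. Then for every x ∈ dom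 g and every y ∈ U ∩ dom h: (1+θ) L(x¹, y) − θ L(x⁰, y) − L(x, y²) ≤ (1/(2τ))‖x¹ − x‖₂² − (1/(2τ))‖x − x²‖₂² + σ^{-1} D(y, y¹) − (1 + γσ) σ^{-1} D(y, y²). -/

import Mathlib

open scoped RealInnerProductSpace

open Filter Set

set_option maxHeartbeats 800000 in
/-- Strong-convexity inequality for a Euclidean proximal step: if `xp` minimizes
`u ↦ g u + ⟪K u, yv⟫ + ‖u − z‖²/(2τ₀)` over a convex set `S` on which `g` is convex,
then the minimum value improves by `‖u − xp‖²/(2τ₀)` at any `u ∈ S`. -/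
lemma hpd_prox_strong {n q : ℕ} (K : EuclideanSpace ℝ (Fin n) →ₗ[ℝ] EuclideanSpace ℝ (Fin q))
    (S : Set (EuclideanSpace ℝ (Fin n))) (g : EuclideanSpace ℝ (Fin n) → ℝ)
    (hg : ConvexOn ℝ S g)
    (z : EuclideanSpace ℝ (Fin n)) (yv : EuclideanSpace ℝ (Fin q)) (τ₀ : ℝ) (hτ₀ : 0 < τ₀)
    (xp : EuclideanSpace ℝ (Fin n)) (hxp : xp ∈ S)
    (hmin : ∀ u ∈ S, g xp + ⟪K xp, yv⟫ + ‖xp - z‖ ^ 2 / (2 * τ₀) ≤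
      g u + ⟪K u, yv⟫ + ‖u - z‖ ^ 2 / (2 * τ₀)) :
    ∀ u ∈ S, g xp + ⟪K xp, yv⟫ + ‖xp - z‖ ^ 2 / (2 * τ₀) + ‖u - xp‖ ^ 2 / (2 * τ₀) ≤
      g u + ⟪K u, yv⟫ + ‖u - z‖ ^ 2 / (2 * τ₀) := by
  intro u hu
  have hev : ∀ t ∈ Set.Ioo (0:ℝ) 1,
      g xp + ⟪K xp, yv⟫ + ‖xp - z‖ ^ 2 / (2 * τ₀) + (1 - t) * (‖u - xp‖ ^ 2 / (2 * τ₀)) ≤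
        g u + ⟪K u, yv⟫ + ‖u - z‖ ^ 2 / (2 * τ₀) := by
    rintro t ⟨ht0, ht1⟩
    have hcomb : xp + t • (u - xp) = (1 - t) • xp + t • u := by module
    have hmem : xp + t • (u - xp) ∈ S := by
      rw [hcomb]; exact hg.1 hxp hu (by linarith) ht0.le (by ring)
    have h1 := hmin _ hmem
    have hgc : g (xp + t • (u - xp)) ≤ (1 - t) * g xp + t * g u := by
      rw [hcomb]
      simpa [smul_eq_mul] using hg.2 hxp hu (by linarith : (0:ℝ) ≤ 1 - t) ht0.le (by ring)
    have hin : ⟪K (xp + t • (u - xp)), yv⟫ = (1 - t) * ⟪K xp, yv⟫ + t * ⟪K u, yv⟫ := by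
      rw [hcomb, map_add, map_smul, map_smul, inner_add_left, real_inner_smul_left,
        real_inner_smul_left]
    have hnorm : ‖xp + t • (u - xp) - z‖ ^ 2 =
        (1 - t) * ‖xp - z‖ ^ 2 + t * ‖u - z‖ ^ 2 - t * (1 - t) * ‖u - xp‖ ^ 2 := by
      simp only [← real_inner_self_eq_norm_sq, inner_sub_left, inner_sub_right,
        inner_add_left, inner_add_right, real_inner_smul_left, real_inner_smul_right,
        real_inner_comm xp u, real_inner_comm z u, real_inner_comm z xp]
      ring
    have hnorm' : ‖xp + t • (u - xp) - z‖ ^ 2 / (2 * τ₀) =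
        (1 - t) * (‖xp - z‖ ^ 2 / (2 * τ₀)) + t * (‖u - z‖ ^ 2 / (2 * τ₀)) -
          t * (1 - t) * (‖u - xp‖ ^ 2 / (2 * τ₀)) := by
      rw [hnorm]; ring
    rw [hin, hnorm'] at h1
    have h2 : t * (g xp + ⟪K xp, yv⟫ + ‖xp - z‖ ^ 2 / (2 * τ₀) +
        (1 - t) * (‖u - xp‖ ^ 2 / (2 * τ₀))) ≤
        t * (g u + ⟪K u, yv⟫ + ‖u - z‖ ^ 2 / (2 * τ₀)) := by nlinarith [h1, hgc]
    exact le_of_mul_le_mul_left h2 ht0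
  have hcont : Filter.Tendsto
      (fun t : ℝ => g xp + ⟪K xp, yv⟫ + ‖xp - z‖ ^ 2 / (2 * τ₀) +
        (1 - t) * (‖u - xp‖ ^ 2 / (2 * τ₀)))
      (nhdsWithin 0 (Set.Ioi 0))
      (nhds (g xp + ⟪K xp, yv⟫ + ‖xp - z‖ ^ 2 / (2 * τ₀) + ‖u - xp‖ ^ 2 / (2 * τ₀))) := by
    have hc : Continuous fun t : ℝ => g xp + ⟪K xp, yv⟫ + ‖xp - z‖ ^ 2 / (2 * τ₀) +
        (1 - t) * (‖u - xp‖ ^ 2 / (2 * τ₀)) :=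
      continuous_const.add ((continuous_const.sub continuous_id).mul continuous_const)
    simpa using (hc.tendsto 0).mono_left nhdsWithin_le_nhds
  exact le_of_tendsto hcont
    (Filter.eventually_of_mem (Ioo_mem_nhdsGT_of_mem ⟨le_refl 0, one_pos⟩) hev)

set_option maxHeartbeats 1600000 in
/-- **Per-iteration descent inequality of the HPD method with linesearch.**
With Lagrangian `L(x, y) = g x + ⟪K x, y⟫ − h y`, extrapolation
`x̄ = x¹ + θ(x¹ − x⁰)`, a Bregman proximal dual step producing `y²`, a Euclidean
proximal primal step producing `x²`, and the linesearch acceptance condition,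
one has for all `x ∈ dom g` and `y ∈ U ∩ dom h`:
`(1+θ) L(x¹,y) − θ L(x⁰,y) − L(x,y²) ≤ (1/2τ)‖x¹−x‖² − (1/2τ)‖x−x²‖²
  + σ⁻¹ D(y,y¹) − (1+γσ) σ⁻¹ D(y,y²)`. -/
theorem hpd_linesearch_descent_inequality
    (m p : ℕ)
    (U domξ : Set (EuclideanSpace ℝ (Fin p)))
    (ξ : EuclideanSpace ℝ (Fin p) → ℝ)
    (gξ : EuclideanSpace ℝ (Fin p) → EuclideanSpace ℝ (Fin p))
    (hUopen : IsOpen U) (hUconv : Convex ℝ U) (hUsub : U ⊆ domξ)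
    (hξ : ConvexOn ℝ domξ ξ)
    (hgrad : ∀ y ∈ U, HasGradientAt ξ (gξ y) y)
    (D : EuclideanSpace ℝ (Fin p) → EuclideanSpace ℝ (Fin p) → ℝ)
    (hD : ∀ x y, D x y = ξ x - ξ y - ⟪gξ y, x - y⟫)
    (γ : ℝ) (hγ : 0 ≤ γ)
    (domg : Set (EuclideanSpace ℝ (Fin m))) (g : EuclideanSpace ℝ (Fin m) → ℝ)
    (hgne : domg.Nonempty) (hg : ConvexOn ℝ domg g)
    (domh : Set (EuclideanSpace ℝ (Fin p))) (h : EuclideanSpace ℝ (Fin p) → ℝ)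
    (hhne : domh.Nonempty) (hh : ConvexOn ℝ domh h)
    (hrel : ConvexOn ℝ U (fun y => h y - γ * ξ y))
    (K : EuclideanSpace ℝ (Fin m) →ₗ[ℝ] EuclideanSpace ℝ (Fin p))
    (Lag : EuclideanSpace ℝ (Fin m) → EuclideanSpace ℝ (Fin p) → ℝ)
    (hLag : ∀ x y, Lag x y = g x + ⟪K x, y⟫ - h y)
    (τ' τ β θ σ : ℝ) (hτ' : 0 < τ') (hτ : 0 < τ) (hβ : 0 < β)
    (hθ : θ = τ / τ') (hσ : σ = β * τ)
    (x0 x1 x2 xbar : EuclideanSpace ℝ (Fin m))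
    (y1 y2 : EuclideanSpace ℝ (Fin p))
    (hx0 : x0 ∈ domg) (hy1 : y1 ∈ U)
    -- `x¹` minimizes `x ↦ g x + ⟪K x, y¹⟫ + ‖x − x⁰‖²/(2τ')`
    (hx1 : x1 ∈ domg ∧ ∀ x ∈ domg,
      g x1 + ⟪K x1, y1⟫ + ‖x1 - x0‖ ^ 2 / (2 * τ') ≤
        g x + ⟪K x, y1⟫ + ‖x - x0‖ ^ 2 / (2 * τ'))
    (hxbar : xbar = x1 + θ • (x1 - x0))
    -- `y²` minimizes `w ↦ h w − ⟪K x̄, w⟫ + D(w, y¹)/σ`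
    (hy2 : y2 ∈ U ∧ y2 ∈ domh ∧ ∀ w ∈ domh ∩ domξ,
      h y2 - ⟪K xbar, y2⟫ + D y2 y1 / σ ≤ h w - ⟪K xbar, w⟫ + D w y1 / σ)
    -- `x²` minimizes `x ↦ g x + ⟪K x, y²⟫ + ‖x − x¹‖²/(2τ)`
    (hx2 : x2 ∈ domg ∧ ∀ x ∈ domg,
      g x2 + ⟪K x2, y2⟫ + ‖x2 - x1‖ ^ 2 / (2 * τ) ≤
        g x + ⟪K x, y2⟫ + ‖x - x1‖ ^ 2 / (2 * τ))
    -- linesearch acceptance condition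
    (hls : 0 ≤ (1 / 2) * ‖x2 - xbar‖ ^ 2 + β⁻¹ * D y2 y1 +
      τ * ⟪K (x2 - xbar), y2 - y1⟫) :
    ∀ x ∈ domg, ∀ y ∈ U ∩ domh,
      (1 + θ) * Lag x1 y - θ * Lag x0 y - Lag x y2 ≤
        (1 / (2 * τ)) * ‖x1 - x‖ ^ 2 - (1 / (2 * τ)) * ‖x - x2‖ ^ 2 +
          σ⁻¹ * D y y1 - (1 + γ * σ) * σ⁻¹ * D y y2 := by
  obtain ⟨hx1mem, hx1min⟩ := hx1
  obtain ⟨hy2U, hy2dom, hy2min⟩ := hy2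
  obtain ⟨hx2mem, hx2min⟩ := hx2
  intro x hx y hy
  obtain ⟨hyU, hyh⟩ := hy
  have hσ0 : 0 < σ := by rw [hσ]; positivity
  have hθ0 : 0 ≤ θ := by rw [hθ]; positivity
  -- the three Euclidean proximal inequalities
  have dA0 := hpd_prox_strong K domg g hg x0 y1 τ' hτ' x1 hx1mem hx1min x0 hx0
  have dA2 := hpd_prox_strong K domg g hg x0 y1 τ' hτ' x1 hx1mem hx1min x2 hx2mem
  have dC := hpd_prox_strong K domg g hg x1 y2 τ hτ x2 hx2mem hx2min x hx
  -- the Bregman proximal inequality with relative strong convexity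
  have hevB : ∀ t ∈ Set.Ioo (0:ℝ) 1,
      (h y2 - ⟪K xbar, y2⟫ + D y2 y1 / σ) - (h y - ⟪K xbar, y⟫ + D y y1 / σ) ≤
        (γ + σ⁻¹) * ((ξ (y2 + t • (y - y2)) - ξ y2) / t - (ξ y - ξ y2)) := by
    rintro t ⟨ht0, ht1⟩
    have hcomb : y2 + t • (y - y2) = (1 - t) • y2 + t • y := by module
    have hU' : y2 + t • (y - y2) ∈ U := by
      rw [hcomb]; exact hUconv hy2U hyU (by linarith) ht0.le (by ring)
    have hh' : y2 + t • (y - y2) ∈ domh := by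
      rw [hcomb]; exact hh.1 hy2dom hyh (by linarith) ht0.le (by ring)
    have h1 := hy2min _ ⟨hh', hUsub hU'⟩
    have hrelc : h (y2 + t • (y - y2)) - γ * ξ (y2 + t • (y - y2)) ≤
        (1 - t) * (h y2 - γ * ξ y2) + t * (h y - γ * ξ y) := by
      have := hrel.2 hy2U hyU (by linarith : (0:ℝ) ≤ 1 - t) ht0.le (by ring)
      rw [← hcomb] at this
      simpa [smul_eq_mul] using this
    have hin : ⟪K xbar, y2 + t • (y - y2)⟫ =
        (1 - t) * ⟪K xbar, y2⟫ + t * ⟪K xbar, y⟫ := by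
      rw [hcomb, inner_add_right, real_inner_smul_right, real_inner_smul_right]
    have hvt : ⟪gξ y1, y2 + t • (y - y2) - y1⟫ =
        (1 - t) * ⟪gξ y1, y2 - y1⟫ + t * ⟪gξ y1, y - y1⟫ := by
      rw [show y2 + t • (y - y2) - y1 = (1 - t) • (y2 - y1) + t • (y - y1) by module,
        inner_add_right, real_inner_smul_right, real_inner_smul_right]
    simp only [hD] at h1 ⊢
    rw [hin, hvt] at h1
    have hexp : t * ((γ + σ⁻¹) * ((ξ (y2 + t • (y - y2)) - ξ y2) / t - (ξ y - ξ y2))) =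
        (γ + σ⁻¹) * (ξ (y2 + t • (y - y2)) - (1 - t) * ξ y2 - t * ξ y) := by
      field_simp
      ring
    have h2 : t * ((h y2 - ⟪K xbar, y2⟫ + (ξ y2 - ξ y1 - ⟪gξ y1, y2 - y1⟫) / σ) -
        (h y - ⟪K xbar, y⟫ + (ξ y - ξ y1 - ⟪gξ y1, y - y1⟫) / σ)) ≤
        t * ((γ + σ⁻¹) * ((ξ (y2 + t • (y - y2)) - ξ y2) / t - (ξ y - ξ y2))) := by
      rw [hexp]
      simp only [div_eq_mul_inv] at h1 ⊢
      generalize σ⁻¹ = si at h1 ⊢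
      linarith [h1, hrelc]
    exact le_of_mul_le_mul_left h2 ht0
  have hder : HasDerivAt (fun t : ℝ => ξ (y2 + t • (y - y2))) ⟪gξ y2, y - y2⟫ 0 := by
    have hf : HasFDerivAt ξ (InnerProductSpace.toDual ℝ _ (gξ y2)) y2 :=
      hasGradientAt_iff_hasFDerivAt.mp (hgrad y2 hy2U)
    have hline : HasDerivAt (fun t : ℝ => y2 + t • (y - y2)) (y - y2) 0 := by
      simpa using ((hasDerivAt_id (0:ℝ)).smul_const (y - y2)).const_add y2
    have h0 : y2 + (0:ℝ) • (y - y2) = y2 := by simp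
    have hf' : HasFDerivAt ξ (InnerProductSpace.toDual ℝ _ (gξ y2))
        (y2 + (0:ℝ) • (y - y2)) := by rw [h0]; exact hf
    have hcomp := hf'.comp_hasDerivAt (0:ℝ) hline
    simpa [Function.comp_def, InnerProductSpace.toDual_apply_apply] using hcomp
  have hslope : Filter.Tendsto (fun t : ℝ => (ξ (y2 + t • (y - y2)) - ξ y2) / t)
      (nhdsWithin 0 (Set.Ioi 0)) (nhds ⟪gξ y2, y - y2⟫) := by
    have h1 := hasDerivAt_iff_tendsto_slope.mp hder
    have h2 := h1.mono_left (nhdsWithin_mono (0:ℝ)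
      (fun u hu => Set.mem_compl_singleton_iff.mpr (ne_of_gt hu)))
    have heq : slope (fun s : ℝ => ξ (y2 + s • (y - y2))) 0 =
        fun t : ℝ => (ξ (y2 + t • (y - y2)) - ξ y2) / t := by
      funext t
      simp [slope_def_field]
    rw [heq] at h2
    exact h2
  have htendB : Filter.Tendsto
      (fun t : ℝ => (γ + σ⁻¹) * ((ξ (y2 + t • (y - y2)) - ξ y2) / t - (ξ y - ξ y2)))
      (nhdsWithin 0 (Set.Ioi 0))
      (nhds ((γ + σ⁻¹) * (⟪gξ y2, y - y2⟫ - (ξ y - ξ y2)))) :=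
    (hslope.sub_const _).const_mul _
  have hB0 : (h y2 - ⟪K xbar, y2⟫ + D y2 y1 / σ) - (h y - ⟪K xbar, y⟫ + D y y1 / σ) ≤
      (γ + σ⁻¹) * (⟪gξ y2, y - y2⟫ - (ξ y - ξ y2)) :=
    ge_of_tendsto htendB
      (Filter.eventually_of_mem (Ioo_mem_nhdsGT_of_mem ⟨le_refl 0, one_pos⟩) hevB)
  have dB : h y2 - ⟪K xbar, y2⟫ + D y2 y1 / σ + (γ + σ⁻¹) * D y y2 ≤
      h y - ⟪K xbar, y⟫ + D y y1 / σ := by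
    have hre : (γ + σ⁻¹) * (⟪gξ y2, y - y2⟫ - (ξ y - ξ y2)) = -((γ + σ⁻¹) * D y y2) := by
      rw [hD]; ring
    rw [hre] at hB0
    linarith
  -- the key algebraic identity combining everything
  have hτ0 : τ ≠ 0 := ne_of_gt hτ
  have hτ'0 : τ' ≠ 0 := ne_of_gt hτ'
  have hβ0 : β ≠ 0 := ne_of_gt hβ
  have key : ((1 / (2 * τ)) * ‖x1 - x‖ ^ 2 - (1 / (2 * τ)) * ‖x - x2‖ ^ 2 +
        σ⁻¹ * D y y1 - (1 + γ * σ) * σ⁻¹ * D y y2) -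
      ((1 + θ) * Lag x1 y - θ * Lag x0 y - Lag x y2) =
      θ * ((g x0 + ⟪K x0, y1⟫ + ‖x0 - x0‖ ^ 2 / (2 * τ')) -
        (g x1 + ⟪K x1, y1⟫ + ‖x1 - x0‖ ^ 2 / (2 * τ') + ‖x0 - x1‖ ^ 2 / (2 * τ'))) +
      ((g x2 + ⟪K x2, y1⟫ + ‖x2 - x0‖ ^ 2 / (2 * τ')) -
        (g x1 + ⟪K x1, y1⟫ + ‖x1 - x0‖ ^ 2 / (2 * τ') + ‖x2 - x1‖ ^ 2 / (2 * τ'))) +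
      ((g x + ⟪K x, y2⟫ + ‖x - x1‖ ^ 2 / (2 * τ)) -
        (g x2 + ⟪K x2, y2⟫ + ‖x2 - x1‖ ^ 2 / (2 * τ) + ‖x - x2‖ ^ 2 / (2 * τ))) +
      ((h y - ⟪K xbar, y⟫ + D y y1 / σ) -
        (h y2 - ⟪K xbar, y2⟫ + D y2 y1 / σ + (γ + σ⁻¹) * D y y2)) +
      τ⁻¹ * ((1 / 2) * ‖x2 - xbar‖ ^ 2 + β⁻¹ * D y2 y1 +
        τ * ⟪K (x2 - xbar), y2 - y1⟫) +
      θ * (‖x1 - x0‖ ^ 2 / (2 * τ')) := by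
    subst hxbar hθ hσ
    simp only [hLag, hD, ← real_inner_self_eq_norm_sq, map_add, map_sub, map_smul,
      inner_sub_left, inner_sub_right, inner_add_left, inner_add_right,
      real_inner_smul_left, real_inner_smul_right,
      real_inner_comm x0 x1, real_inner_comm x0 x2, real_inner_comm x0 x,
      real_inner_comm x1 x2, real_inner_comm x1 x, real_inner_comm x2 x]
    field_simp
    ring
  have s1 : 0 ≤ θ * ((g x0 + ⟪K x0, y1⟫ + ‖x0 - x0‖ ^ 2 / (2 * τ')) -
      (g x1 + ⟪K x1, y1⟫ + ‖x1 - x0‖ ^ 2 / (2 * τ') + ‖x0 - x1‖ ^ 2 / (2 * τ'))) :=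
    mul_nonneg hθ0 (by linarith [dA0])
  have s2 : 0 ≤ (g x2 + ⟪K x2, y1⟫ + ‖x2 - x0‖ ^ 2 / (2 * τ')) -
      (g x1 + ⟪K x1, y1⟫ + ‖x1 - x0‖ ^ 2 / (2 * τ') + ‖x2 - x1‖ ^ 2 / (2 * τ')) := by
    linarith [dA2]
  have s3 : 0 ≤ (g x + ⟪K x, y2⟫ + ‖x - x1‖ ^ 2 / (2 * τ)) -
      (g x2 + ⟪K x2, y2⟫ + ‖x2 - x1‖ ^ 2 / (2 * τ) + ‖x - x2‖ ^ 2 / (2 * τ)) := by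
    linarith [dC]
  have s4 : 0 ≤ (h y - ⟪K xbar, y⟫ + D y y1 / σ) -
      (h y2 - ⟪K xbar, y2⟫ + D y2 y1 / σ + (γ + σ⁻¹) * D y y2) := by
    linarith [dB]
  have s5 : 0 ≤ τ⁻¹ * ((1 / 2) * ‖x2 - xbar‖ ^ 2 + β⁻¹ * D y2 y1 +
      τ * ⟪K (x2 - xbar), y2 - y1⟫) :=
    mul_nonneg (inv_nonneg.mpr hτ.le) hls
  have s6 : 0 ≤ θ * (‖x1 - x0‖ ^ 2 / (2 * τ')) :=
    mul_nonneg hθ0 (by positivity)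
  linarith [key, s1, s2, s3, s4, s5, s6]
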